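/- Let n = 3, κ = 3, f(x) = −x₁ − x₂ + 2x₁x₂ + x₃², F₁(x) = (x₁, x₁ + x₂, x₃ − 1), F₂(x) = (x₃ − 2x₂, 2 − x₃, x₁ − x₂ + x₃). Then x̄ = (0,0,1) is a nondegenerate C-stationary point of MPCC with a01(x̄) = {1,2,3}, a10(x̄) = a00(x̄) = ∅, unique multipliers σ₁,₁ = 0, σ₁,₂ = −1, σ₁,₃ = 2, and C-index equal to 0; moreover NDC4 is violated at x̄ (since σ₁,₁ = 0), and x̄ is the limit as t → 0 of the nondegenerate KKT points x^t = (t/2, t/2, 1) of the Scholtes regularization S(t), which have quadratic index 1. -/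

import Mathlib

open Filter Topology Set

namespace MPCCPaper

variable {n κ : ℕ}

/-- Differential of the `j`-th component of `F` at `x`. -/
noncomputable def Dc (F : (Fin n → ℝ) → Fin κ → ℝ) (j : Fin κ) (x : Fin n → ℝ) :
    (Fin n → ℝ) →L[ℝ] ℝ :=
  fderiv ℝ (fun y => F y j) x

/-- The MPCC feasible set `M`. -/
def Mset (F1 F2 : (Fin n → ℝ) → Fin κ → ℝ) : Set (Fin n → ℝ) :=
  {x | ∀ j, F1 x j * F2 x j = 0 ∧ 0 ≤ F1 x j ∧ 0 ≤ F2 x j}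

/-- Feasible set `M^S(t)` of the Scholtes regularization. -/
def MS (F1 F2 : (Fin n → ℝ) → Fin κ → ℝ) (t : ℝ) : Set (Fin n → ℝ) :=
  {x | ∀ j, F1 x j * F2 x j ≤ t ∧ 0 ≤ F1 x j ∧ 0 ≤ F2 x j}

/-- Feasible set `M^{S=}(t)` of the smoothing with equality constraints. -/
def MSeq (F1 F2 : (Fin n → ℝ) → Fin κ → ℝ) (t : ℝ) : Set (Fin n → ℝ) :=
  {x | ∀ j, F1 x j * F2 x j = t ∧ 0 ≤ F1 x j ∧ 0 ≤ F2 x j}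

def a01 (F1 F2 : (Fin n → ℝ) → Fin κ → ℝ) (x : Fin n → ℝ) : Set (Fin κ) :=
  {j | F1 x j = 0 ∧ 0 < F2 x j}

def a10 (F1 F2 : (Fin n → ℝ) → Fin κ → ℝ) (x : Fin n → ℝ) : Set (Fin κ) :=
  {j | 0 < F1 x j ∧ F2 x j = 0}

def a00 (F1 F2 : (Fin n → ℝ) → Fin κ → ℝ) (x : Fin n → ℝ) : Set (Fin κ) :=
  {j | F1 x j = 0 ∧ F2 x j = 0}

/-- Active set `H(x)` of the regularized constraints. -/
def Hset (F1 F2 : (Fin n → ℝ) → Fin κ → ℝ) (t : ℝ) (x : Fin n → ℝ) : Set (Fin κ) :=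
  {j | F1 x j * F2 x j = t}

def N1set (F1 : (Fin n → ℝ) → Fin κ → ℝ) (x : Fin n → ℝ) : Set (Fin κ) :=
  {j | F1 x j = 0}

def N2set (F2 : (Fin n → ℝ) → Fin κ → ℝ) (x : Fin n → ℝ) : Set (Fin κ) :=
  {j | F2 x j = 0}

/-- MPCC-tailored linear independence constraint qualification. -/
def MPCCLICQ (F1 F2 : (Fin n → ℝ) → Fin κ → ℝ) (x : Fin n → ℝ) : Prop :=
  LinearIndependent ℝ
    (Sum.elim
      (fun j : ↥(a01 F1 F2 x ∪ a00 F1 F2 x) => Dc F1 j.1 x)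
      (fun j : ↥(a10 F1 F2 x ∪ a00 F1 F2 x) => Dc F2 j.1 x))

/-- Gradient of the product constraint `F1_j · F2_j` at `x`. -/
noncomputable def gradProd (F1 F2 : (Fin n → ℝ) → Fin κ → ℝ) (j : Fin κ) (x : Fin n → ℝ) :
    (Fin n → ℝ) →L[ℝ] ℝ :=
  F2 x j • Dc F1 j x + F1 x j • Dc F2 j x

/-- LICQ for the Scholtes regularization `S(t)`. -/
def SLICQ (F1 F2 : (Fin n → ℝ) → Fin κ → ℝ) (t : ℝ) (x : Fin n → ℝ) : Prop :=
  LinearIndependent ℝ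
    (Sum.elim (fun j : ↥(Hset F1 F2 t x) => gradProd F1 F2 j.1 x)
      (Sum.elim (fun j : ↥(N1set F1 x) => Dc F1 j.1 x)
        (fun j : ↥(N2set F2 x) => Dc F2 j.1 x)))

/-- W-stationarity with prescribed multipliers (supported on the active index sets). -/
structure WStatWith (f : (Fin n → ℝ) → ℝ) (F1 F2 : (Fin n → ℝ) → Fin κ → ℝ)
    (x : Fin n → ℝ) (σ1 σ2 ϱ1 ϱ2 : Fin κ → ℝ) : Prop where
  feas : x ∈ Mset F1 F2
  supp_s1 : ∀ j, j ∉ a01 F1 F2 x → σ1 j = 0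
  supp_s2 : ∀ j, j ∉ a10 F1 F2 x → σ2 j = 0
  supp_r1 : ∀ j, j ∉ a00 F1 F2 x → ϱ1 j = 0
  supp_r2 : ∀ j, j ∉ a00 F1 F2 x → ϱ2 j = 0
  stat : fderiv ℝ f x =
    ∑ j, (σ1 j • Dc F1 j x + σ2 j • Dc F2 j x + ϱ1 j • Dc F1 j x + ϱ2 j • Dc F2 j x)

/-- C-stationarity with prescribed multipliers. -/
def CStatWith (f : (Fin n → ℝ) → ℝ) (F1 F2 : (Fin n → ℝ) → Fin κ → ℝ)
    (x : Fin n → ℝ) (σ1 σ2 ϱ1 ϱ2 : Fin κ → ℝ) : Prop :=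
  WStatWith f F1 F2 x σ1 σ2 ϱ1 ϱ2 ∧ ∀ j ∈ a00 F1 F2 x, 0 ≤ ϱ1 j * ϱ2 j

/-- S-stationarity with prescribed multipliers. -/
def SStatWith (f : (Fin n → ℝ) → ℝ) (F1 F2 : (Fin n → ℝ) → Fin κ → ℝ)
    (x : Fin n → ℝ) (σ1 σ2 ϱ1 ϱ2 : Fin κ → ℝ) : Prop :=
  WStatWith f F1 F2 x σ1 σ2 ϱ1 ϱ2 ∧ ∀ j ∈ a00 F1 F2 x, 0 ≤ ϱ1 j ∧ 0 ≤ ϱ2 j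

/-- The MPCC Lagrange function for given multipliers. -/
noncomputable def Lag (f : (Fin n → ℝ) → ℝ) (F1 F2 : (Fin n → ℝ) → Fin κ → ℝ)
    (σ1 σ2 ϱ1 ϱ2 : Fin κ → ℝ) (x : Fin n → ℝ) : ℝ :=
  f x - ∑ j, (σ1 j * F1 x j + σ2 j * F2 x j + ϱ1 j * F1 x j + ϱ2 j * F2 x j)

/-- The Hessian of `g` at `x` as a bilinear map, evaluated at `(ξ, ζ)`. -/
noncomputable def hBil (g : (Fin n → ℝ) → ℝ) (x ξ ζ : Fin n → ℝ) : ℝ :=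
  iteratedFDeriv ℝ 2 g x ![ξ, ζ]

/-- The Hessian quadratic form of `g` at `x`. -/
noncomputable def hQ (g : (Fin n → ℝ) → ℝ) (x ξ : Fin n → ℝ) : ℝ := hBil g x ξ ξ

/-- The tangent space `T_x` of MPCC at `x`. -/
def Tspace (F1 F2 : (Fin n → ℝ) → Fin κ → ℝ) (x : Fin n → ℝ) : Set (Fin n → ℝ) :=
  {ξ | (∀ j ∈ a01 F1 F2 x ∪ a00 F1 F2 x, Dc F1 j x ξ = 0) ∧
       (∀ j ∈ a10 F1 F2 x ∪ a00 F1 F2 x, Dc F2 j x ξ = 0)}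

/-- Nondegeneracy of a bilinear form on a set (subspace). -/
def NondegOn (B : (Fin n → ℝ) → (Fin n → ℝ) → ℝ) (T : Set (Fin n → ℝ)) : Prop :=
  ∀ ξ ∈ T, (∀ ζ ∈ T, B ξ ζ = 0) → ξ = 0

/-- `Q` has negative index `q` on `T`: `q` is the maximal dimension of a subspace of `T`
on which `Q` is negative definite. -/
def HasNegIndexOn (Q : (Fin n → ℝ) → ℝ) (T : Set (Fin n → ℝ)) (q : ℕ) : Prop :=
  (∃ W : Submodule ℝ (Fin n → ℝ), (W : Set (Fin n → ℝ)) ⊆ T ∧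
      Module.finrank ℝ ↥W = q ∧ ∀ ξ ∈ W, ξ ≠ 0 → Q ξ < 0) ∧
  (∀ W : Submodule ℝ (Fin n → ℝ), (W : Set (Fin n → ℝ)) ⊆ T →
      (∀ ξ ∈ W, ξ ≠ 0 → Q ξ < 0) → Module.finrank ℝ ↥W ≤ q)

/-- Nondegenerate C-stationary point (NDC1, NDC2, NDC3) with prescribed multipliers. -/
def NondegCStat (f : (Fin n → ℝ) → ℝ) (F1 F2 : (Fin n → ℝ) → Fin κ → ℝ)
    (x : Fin n → ℝ) (σ1 σ2 ϱ1 ϱ2 : Fin κ → ℝ) : Prop :=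
  CStatWith f F1 F2 x σ1 σ2 ϱ1 ϱ2 ∧ MPCCLICQ F1 F2 x ∧
  (∀ j ∈ a00 F1 F2 x, 0 < ϱ1 j * ϱ2 j) ∧
  NondegOn (hBil (Lag f F1 F2 σ1 σ2 ϱ1 ϱ2) x) (Tspace F1 F2 x)

/-- Condition NDC4: non-biactive multipliers do not vanish. -/
def NDC4 (F1 F2 : (Fin n → ℝ) → Fin κ → ℝ) (x : Fin n → ℝ) (σ1 σ2 : Fin κ → ℝ) : Prop :=
  (∀ j ∈ a01 F1 F2 x, σ1 j ≠ 0) ∧ (∀ j ∈ a10 F1 F2 x, σ2 j ≠ 0)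

/-- The biactive index: number of negative biactive multiplier pairs. -/
noncomputable def BIndex (F1 F2 : (Fin n → ℝ) → Fin κ → ℝ) (x : Fin n → ℝ)
    (ϱ1 ϱ2 : Fin κ → ℝ) : ℕ :=
  {j | j ∈ a00 F1 F2 x ∧ ϱ1 j < 0 ∧ ϱ2 j < 0}.ncard

/-- The C-index of a C-stationary point equals `c`. -/
def HasCIndex (f : (Fin n → ℝ) → ℝ) (F1 F2 : (Fin n → ℝ) → Fin κ → ℝ)
    (x : Fin n → ℝ) (σ1 σ2 ϱ1 ϱ2 : Fin κ → ℝ) (c : ℕ) : Prop :=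
  ∃ q : ℕ,
    HasNegIndexOn (hQ (Lag f F1 F2 σ1 σ2 ϱ1 ϱ2) x) (Tspace F1 F2 x) q ∧
    c = q + BIndex F1 F2 x ϱ1 ϱ2

/-- Karush-Kuhn-Tucker point of the Scholtes regularization `S(t)` with multipliers. -/
structure KKTWith (f : (Fin n → ℝ) → ℝ) (F1 F2 : (Fin n → ℝ) → Fin κ → ℝ)
    (t : ℝ) (x : Fin n → ℝ) (η ν1 ν2 : Fin κ → ℝ) : Prop where
  feas : x ∈ MS F1 F2 t
  eta_nn : ∀ j, 0 ≤ η j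
  nu1_nn : ∀ j, 0 ≤ ν1 j
  nu2_nn : ∀ j, 0 ≤ ν2 j
  comp_eta : ∀ j, η j * (t - F1 x j * F2 x j) = 0
  comp_nu1 : ∀ j, ν1 j * F1 x j = 0
  comp_nu2 : ∀ j, ν2 j * F2 x j = 0
  stat : fderiv ℝ f x =
    ∑ j, (-(η j) • gradProd F1 F2 j x + ν1 j • Dc F1 j x + ν2 j • Dc F2 j x)

/-- The Lagrange function of the Scholtes regularization `S(t)`. -/
noncomputable def LagS (f : (Fin n → ℝ) → ℝ) (F1 F2 : (Fin n → ℝ) → Fin κ → ℝ)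
    (t : ℝ) (η ν1 ν2 : Fin κ → ℝ) (x : Fin n → ℝ) : ℝ :=
  f x - ∑ j, (η j * (t - F1 x j * F2 x j) + ν1 j * F1 x j + ν2 j * F2 x j)

/-- The tangent space `T^S_x` of `S(t)` at `x`. -/
def TspaceS (F1 F2 : (Fin n → ℝ) → Fin κ → ℝ) (t : ℝ) (x : Fin n → ℝ) :
    Set (Fin n → ℝ) :=
  {ξ | (∀ j ∈ Hset F1 F2 t x, gradProd F1 F2 j x ξ = 0) ∧
       (∀ j ∈ N1set F1 x, Dc F1 j x ξ = 0) ∧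
       (∀ j ∈ N2set F2 x, Dc F2 j x ξ = 0)}

/-- Nondegenerate KKT point of `S(t)` (ND1, ND2, ND3) with prescribed multipliers. -/
def NondegKKT (f : (Fin n → ℝ) → ℝ) (F1 F2 : (Fin n → ℝ) → Fin κ → ℝ)
    (t : ℝ) (x : Fin n → ℝ) (η ν1 ν2 : Fin κ → ℝ) : Prop :=
  KKTWith f F1 F2 t x η ν1 ν2 ∧ SLICQ F1 F2 t x ∧
  (∀ j ∈ Hset F1 F2 t x, 0 < η j) ∧
  (∀ j ∈ N1set F1 x, 0 < ν1 j) ∧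
  (∀ j ∈ N2set F2 x, 0 < ν2 j) ∧
  NondegOn (hBil (LagS f F1 F2 t η ν1 ν2) x) (TspaceS F1 F2 t x)

/-- KKT point of the smoothing `S^=(t)` with multipliers. -/
structure KKTEqWith (f : (Fin n → ℝ) → ℝ) (F1 F2 : (Fin n → ℝ) → Fin κ → ℝ)
    (t : ℝ) (x : Fin n → ℝ) (lam ν1 ν2 : Fin κ → ℝ) : Prop where
  feas : x ∈ MSeq F1 F2 t
  nu1_nn : ∀ j, 0 ≤ ν1 j
  nu2_nn : ∀ j, 0 ≤ ν2 j
  comp_nu1 : ∀ j, ν1 j * F1 x j = 0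
  comp_nu2 : ∀ j, ν2 j * F2 x j = 0
  stat : fderiv ℝ f x =
    ∑ j, (lam j • gradProd F1 F2 j x + ν1 j • Dc F1 j x + ν2 j • Dc F2 j x)

/-- The Lagrange function of the smoothing `S^=(t)`. -/
noncomputable def LagSeq (f : (Fin n → ℝ) → ℝ) (F1 F2 : (Fin n → ℝ) → Fin κ → ℝ)
    (t : ℝ) (lam ν1 ν2 : Fin κ → ℝ) (x : Fin n → ℝ) : ℝ :=
  f x - ∑ j, (lam j * (F1 x j * F2 x j - t) + ν1 j * F1 x j + ν2 j * F2 x j)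

/-- The tangent space `T^{S=}_x` of `S^=(t)` at `x`. -/
def TspaceSeq (F1 F2 : (Fin n → ℝ) → Fin κ → ℝ) (x : Fin n → ℝ) : Set (Fin n → ℝ) :=
  {ξ | (∀ j, gradProd F1 F2 j x ξ = 0) ∧
       (∀ j, F1 x j = 0 → Dc F1 j x ξ = 0) ∧
       (∀ j, F2 x j = 0 → Dc F2 j x ξ = 0)}

/-- LICQ for the smoothing `S^=(t)` at `x`: gradients of all active constraints
(all equality constraints together with the active bound constraints) are linearly
independent. -/
def SeqLICQ (F1 F2 : (Fin n → ℝ) → Fin κ → ℝ) (x : Fin n → ℝ) : Prop :=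
  LinearIndependent ℝ
    (Sum.elim (fun j : Fin κ => gradProd F1 F2 j x)
      (Sum.elim (fun j : ↥(N1set F1 x) => Dc F1 j.1 x)
        (fun j : ↥(N2set F2 x) => Dc F2 j.1 x)))

/-- Nondegenerate KKT point of the smoothing `S^=(t)` with prescribed multipliers. -/
def NondegKKTEq (f : (Fin n → ℝ) → ℝ) (F1 F2 : (Fin n → ℝ) → Fin κ → ℝ)
    (t : ℝ) (x : Fin n → ℝ) (lam ν1 ν2 : Fin κ → ℝ) : Prop :=
  KKTEqWith f F1 F2 t x lam ν1 ν2 ∧ SeqLICQ F1 F2 x ∧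
  (∀ j ∈ N1set F1 x, 0 < ν1 j) ∧
  (∀ j ∈ N2set F2 x, 0 < ν2 j) ∧
  NondegOn (hBil (LagSeq f F1 F2 t lam ν1 ν2) x) (TspaceSeq F1 F2 x)

/-- The critical cone `C_x` associated with an S-stationary point and its multipliers. -/
def Ccone (F1 F2 : (Fin n → ℝ) → Fin κ → ℝ) (x : Fin n → ℝ)
    (σ1 σ2 ϱ1 ϱ2 : Fin κ → ℝ) : Set (Fin n → ℝ) :=
  {ξ | (∀ j, ((j ∈ a01 F1 F2 x ∧ σ1 j ≠ 0) ∨ (j ∈ a00 F1 F2 x ∧ 0 < ϱ1 j)) →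
        Dc F1 j x ξ = 0) ∧
       (∀ j, ((j ∈ a10 F1 F2 x ∧ σ2 j ≠ 0) ∨ (j ∈ a00 F1 F2 x ∧ 0 < ϱ2 j)) →
        Dc F2 j x ξ = 0)}

/-- The cone `C^=_x` of critical directions used for MPCC-SOC. -/
def CconeEq (F1 F2 : (Fin n → ℝ) → Fin κ → ℝ) (x : Fin n → ℝ)
    (ϱ1 ϱ2 : Fin κ → ℝ) : Set (Fin n → ℝ) :=
  {ξ | (∀ j, (j ∈ a01 F1 F2 x ∨ (j ∈ a00 F1 F2 x ∧ 0 < ϱ1 j)) → Dc F1 j x ξ = 0) ∧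
       (∀ j, (j ∈ a10 F1 F2 x ∨ (j ∈ a00 F1 F2 x ∧ 0 < ϱ2 j)) → Dc F2 j x ξ = 0) ∧
       (∀ j ∈ a00 F1 F2 x, ϱ1 j = 0 → 0 ≤ Dc F1 j x ξ) ∧
       (∀ j ∈ a00 F1 F2 x, ϱ2 j = 0 → 0 ≤ Dc F2 j x ξ)}

/-- Strong second order sufficiency condition. -/
def SSOSC (f : (Fin n → ℝ) → ℝ) (F1 F2 : (Fin n → ℝ) → Fin κ → ℝ)
    (x : Fin n → ℝ) (σ1 σ2 ϱ1 ϱ2 : Fin κ → ℝ) : Prop :=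
  ∀ ξ ∈ Ccone F1 F2 x σ1 σ2 ϱ1 ϱ2, ξ ≠ 0 → 0 < hQ (Lag f F1 F2 σ1 σ2 ϱ1 ϱ2) x ξ

/-- Second order condition for MPCC (MPCC-SOC). -/
def MPCCSOC (f : (Fin n → ℝ) → ℝ) (F1 F2 : (Fin n → ℝ) → Fin κ → ℝ)
    (x : Fin n → ℝ) (σ1 σ2 ϱ1 ϱ2 : Fin κ → ℝ) : Prop :=
  ∀ ξ ∈ CconeEq F1 F2 x ϱ1 ϱ2, ξ ≠ 0 → 0 < hQ (Lag f F1 F2 σ1 σ2 ϱ1 ϱ2) x ξ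

noncomputable def fEx2 : (Fin 3 → ℝ) → ℝ :=
  fun x => -x 0 - x 1 + 2 * x 0 * x 1 + (x 2)^2

noncomputable def F1Ex2 : (Fin 3 → ℝ) → Fin 3 → ℝ :=
  fun x => ![x 0, x 0 + x 1, x 2 - 1]

noncomputable def F2Ex2 : (Fin 3 → ℝ) → Fin 3 → ℝ :=
  fun x => ![x 2 - 2 * x 1, 2 - x 2, x 0 - x 1 + x 2]

noncomputable def xtEx2 (t : ℝ) : Fin 3 → ℝ := ![t/2, t/2, 1]

noncomputable def ηEx2 (t : ℝ) : Fin 3 → ℝ := ![0, 1 - t, 0]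

noncomputable def ν1Ex2 (t : ℝ) : Fin 3 → ℝ := ![0, 0, 2 - t + t^2]

noncomputable def xbarEx2 : Fin 3 → ℝ := ![0, 0, 1]

noncomputable def σ1Ex2 : Fin 3 → ℝ := ![0, -1, 2]


noncomputable def pr (i : Fin 3) : (Fin 3 → ℝ) →L[ℝ] ℝ := ContinuousLinearMap.proj i

lemma pr_apply (i : Fin 3) (x : Fin 3 → ℝ) : pr i x = x i := rfl

lemma hasF_proj (i : Fin 3) (x : Fin 3 → ℝ) :
    HasFDerivAt (fun y : Fin 3 → ℝ => y i) (pr i) x := by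
  exact (pr i).hasFDerivAt

lemma Dc10 (x : Fin 3 → ℝ) : Dc F1Ex2 0 x = pr 0 := by
  have h : (fun y : Fin 3 → ℝ => F1Ex2 y 0) = fun y => y 0 := by funext y; simp [F1Ex2]
  rw [Dc, h, (hasF_proj 0 x).fderiv]

lemma Dc11 (x : Fin 3 → ℝ) : Dc F1Ex2 1 x = pr 0 + pr 1 := by
  have h : (fun y : Fin 3 → ℝ => F1Ex2 y 1) = fun y => y 0 + y 1 := by funext y; simp [F1Ex2]
  rw [Dc, h]; exact ((hasF_proj 0 x).add (hasF_proj 1 x)).fderiv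

lemma Dc12 (x : Fin 3 → ℝ) : Dc F1Ex2 2 x = pr 2 := by
  have h : (fun y : Fin 3 → ℝ => F1Ex2 y 2) = fun y => y 2 - 1 := by funext y; simp [F1Ex2]
  rw [Dc, h, ((hasF_proj 2 x).sub_const 1).fderiv]

lemma Dc20 (x : Fin 3 → ℝ) : Dc F2Ex2 0 x = pr 2 - (2:ℝ) • pr 1 := by
  have h : (fun y : Fin 3 → ℝ => F2Ex2 y 0) = fun y => y 2 - 2 * y 1 := by funext y; simp [F2Ex2]
  rw [Dc, h]; exact ((hasF_proj 2 x).sub ((hasF_proj 1 x).const_mul 2)).fderiv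

lemma Dc21 (x : Fin 3 → ℝ) : Dc F2Ex2 1 x = -pr 2 := by
  have h : (fun y : Fin 3 → ℝ => F2Ex2 y 1) = fun y => 2 - y 2 := by funext y; simp [F2Ex2]
  rw [Dc, h, ((hasF_proj 2 x).const_sub 2).fderiv]

lemma Dc22 (x : Fin 3 → ℝ) : Dc F2Ex2 2 x = pr 0 - pr 1 + pr 2 := by
  have h : (fun y : Fin 3 → ℝ => F2Ex2 y 2) = fun y => y 0 - y 1 + y 2 := by funext y; simp [F2Ex2]
  rw [Dc, h]; exact (((hasF_proj 0 x).sub (hasF_proj 1 x)).add (hasF_proj 2 x)).fderiv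

lemma fderiv_f (x ξ : Fin 3 → ℝ) :
    fderiv ℝ fEx2 x ξ = (2*x 1 - 1)*ξ 0 + (2*x 0 - 1)*ξ 1 + 2*x 2*ξ 2 := by
  have hf : fEx2 = fun y : Fin 3 → ℝ => -y 0 - y 1 + 2*y 0*y 1 + y 2 * y 2 := by
    funext y; simp [fEx2]; ring
  have h := ((((hasF_proj 0 x).neg.sub (hasF_proj 1 x)).add
      (((hasF_proj 0 x).const_mul 2).mul (hasF_proj 1 x))).add
      ((hasF_proj 2 x).mul (hasF_proj 2 x)))
  rw [hf, HasFDerivAt.fderiv (f := fun y : Fin 3 → ℝ => -y 0 - y 1 + 2*y 0*y 1 + y 2 * y 2) h]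
  simp [pr]
  ring

noncomputable def gS (t : ℝ) : (Fin 3 → ℝ) → ℝ :=
  fun x => -x 0 - x 1 + 2*x 0*x 1 + x 2*x 2 + (1-t)*((x 0 + x 1)*(2 - x 2))
    - (1-t)*t - (2-t+t^2)*(x 2-1)

noncomputable def Hop (t : ℝ) : (Fin 3 → ℝ) →L[ℝ] ((Fin 3 → ℝ) →L[ℝ] ℝ) :=
  (pr 0).smulRight ((2:ℝ) • pr 1 + (t-1) • pr 2) +
  (pr 1).smulRight ((2:ℝ) • pr 0 + (t-1) • pr 2) +
  (pr 2).smulRight ((t-1) • pr 0 + (t-1) • pr 1 + (2:ℝ) • pr 2)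

noncomputable def Cconst (t : ℝ) : (Fin 3 → ℝ) →L[ℝ] ℝ :=
  (1-2*t) • pr 0 + (1-2*t) • pr 1 + (-(2-t+t^2)) • pr 2

lemma Hop_apply (t : ℝ) (ξ ζ : Fin 3 → ℝ) :
    Hop t ξ ζ = ξ 0 * (2*ζ 1 + (t-1)*ζ 2) + ξ 1 * (2*ζ 0 + (t-1)*ζ 2)
      + ξ 2 * ((t-1)*ζ 0 + (t-1)*ζ 1 + 2*ζ 2) := by
  simp [Hop, pr]
  ring

lemma fderiv_gS (t : ℝ) (x : Fin 3 → ℝ) : fderiv ℝ (gS t) x = Cconst t + Hop t x := by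
  have h0 := hasF_proj 0 x
  have h1 := hasF_proj 1 x
  have h2 := hasF_proj 2 x
  have h := (((((h0.neg.sub h1).add ((h0.const_mul 2).mul h1)).add (h2.mul h2)).add
      (((h0.add h1).mul (h2.const_sub 2)).const_mul (1-t))).sub_const ((1-t)*t)).sub
      ((h2.sub_const 1).const_mul (2-t+t^2))
  unfold gS; rw [HasFDerivAt.fderiv (f := fun x : Fin 3 → ℝ => -x 0 - x 1 + 2*x 0*x 1 + x 2*x 2 + (1-t)*((x 0 + x 1)*(2 - x 2)) - (1-t)*t - (2-t+t^2)*(x 2-1)) h]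
  ext ξ
  simp [pr, Cconst, Hop]
  ring

lemma fderiv2_gS (t : ℝ) (x : Fin 3 → ℝ) : fderiv ℝ (fderiv ℝ (gS t)) x = Hop t := by
  have h : fderiv ℝ (gS t) = fun y => Cconst t + Hop t y := funext (fderiv_gS t)
  rw [h]
  exact (((Hop t).hasFDerivAt (x := x)).const_add (Cconst t)).fderiv

lemma hBil_gS (t : ℝ) (x ξ ζ : Fin 3 → ℝ) : hBil (gS t) x ξ ζ = Hop t ξ ζ := by
  rw [hBil, iteratedFDeriv_two_apply, fderiv2_gS]
  simp

lemma LagS_eq_gS (t : ℝ) :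
    LagS fEx2 F1Ex2 F2Ex2 t (ηEx2 t) (ν1Ex2 t) 0 = gS t := by
  funext x
  simp [LagS, gS, Fin.sum_univ_three, ηEx2, ν1Ex2, fEx2, F1Ex2, F2Ex2]
  ring

lemma a01_xbar : a01 F1Ex2 F2Ex2 xbarEx2 = Set.univ := by
  ext j
  fin_cases j <;> simp [a01, F1Ex2, F2Ex2, xbarEx2] <;> norm_num

lemma a10_xbar : a10 F1Ex2 F2Ex2 xbarEx2 = ∅ := by
  ext j
  fin_cases j <;> simp [a10, F1Ex2, F2Ex2, xbarEx2] <;> norm_num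

lemma a00_xbar : a00 F1Ex2 F2Ex2 xbarEx2 = ∅ := by
  ext j
  fin_cases j <;> simp [a00, F1Ex2, F2Ex2, xbarEx2] <;> norm_num

lemma union1_xbar : a01 F1Ex2 F2Ex2 xbarEx2 ∪ a00 F1Ex2 F2Ex2 xbarEx2 = Set.univ := by
  rw [a01_xbar, a00_xbar]; simp

lemma union2_xbar : a10 F1Ex2 F2Ex2 xbarEx2 ∪ a00 F1Ex2 F2Ex2 xbarEx2 = ∅ := by
  rw [a10_xbar, a00_xbar]; simp

lemma Tspace_xbar : Tspace F1Ex2 F2Ex2 xbarEx2 = {0} := by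
  ext ξ
  simp only [Tspace, Set.mem_setOf_eq, union1_xbar, union2_xbar, Set.mem_singleton_iff]
  constructor
  · rintro ⟨h1, -⟩
    have e0 := h1 0 (Set.mem_univ 0)
    have e1 := h1 1 (Set.mem_univ 1)
    have e2 := h1 2 (Set.mem_univ 2)
    rw [Dc10] at e0; rw [Dc11] at e1; rw [Dc12] at e2
    simp only [pr_apply, ContinuousLinearMap.add_apply] at e0 e1 e2
    funext i
    fin_cases i
    · exact e0
    · show ξ 1 = 0; linarith
    · exact e2
  · rintro rfl
    refine ⟨fun j _ => map_zero _, fun j hj => absurd hj (Set.notMem_empty j)⟩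


noncomputable def vEx : Fin 3 → ℝ := ![1,-1,0]

lemma vEx_ne : vEx ≠ 0 := by
  intro h
  have := congrFun h 0
  simp [vEx] at this

lemma F1_xt (t : ℝ) : F1Ex2 (xtEx2 t) = ![t/2, t, 0] := by
  funext i
  fin_cases i <;> simp [F1Ex2, xtEx2] <;> ring

lemma F2_xt (t : ℝ) : F2Ex2 (xtEx2 t) = ![1-t, 1, 1] := by
  funext i
  fin_cases i <;> simp [F2Ex2, xtEx2] <;> ring

lemma Hset_xt {t : ℝ} (h0 : 0 < t) (h1 : t < 1) :
    Hset F1Ex2 F2Ex2 t (xtEx2 t) = {1} := by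
  ext j
  fin_cases j
  · simp [Hset, F1_xt, F2_xt]
    intro h; nlinarith
  · simp [Hset, F1_xt, F2_xt]
  · simp [Hset, F1_xt, F2_xt]
    exact fun h => absurd h.symm (ne_of_gt h0)

lemma N1set_xt {t : ℝ} (h0 : 0 < t) : N1set F1Ex2 (xtEx2 t) = {2} := by
  ext j
  fin_cases j
  · simp [N1set, F1_xt]
    intro h; nlinarith
  · simp [N1set, F1_xt]
    exact ne_of_gt h0
  · simp [N1set, F1_xt]

lemma N2set_xt {t : ℝ} (h1 : t < 1) : N2set F2Ex2 (xtEx2 t) = ∅ := by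
  ext j
  fin_cases j
  · simp [N2set, F2_xt]
    intro h; nlinarith
  · simp [N2set, F2_xt]
  · simp [N2set, F2_xt]

lemma gp1_xt (t : ℝ) (ξ : Fin 3 → ℝ) :
    gradProd F1Ex2 F2Ex2 1 (xtEx2 t) ξ = ξ 0 + ξ 1 - t * ξ 2 := by
  simp only [gradProd, F1_xt, F2_xt, ContinuousLinearMap.add_apply,
    ContinuousLinearMap.smul_apply, Dc11, Dc21, Matrix.cons_val_one, Matrix.head_cons, Matrix.cons_val_zero,
    ContinuousLinearMap.neg_apply, pr_apply, smul_eq_mul]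
  ring

lemma TspaceS_xt {t : ℝ} (h0 : 0 < t) (h1 : t < 1) :
    TspaceS F1Ex2 F2Ex2 t (xtEx2 t) = ↑(Submodule.span ℝ {vEx}) := by
  ext ξ
  constructor
  · rintro ⟨hH, hN1, hN2⟩
    have k1 := hH 1 (by rw [Hset_xt h0 h1]; rfl)
    have k2 := hN1 2 (by rw [N1set_xt h0]; rfl)
    rw [gp1_xt] at k1
    rw [Dc12] at k2
    rw [pr_apply] at k2
    rw [SetLike.mem_coe, Submodule.mem_span_singleton]
    refine ⟨ξ 0, ?_⟩
    funext i
    fin_cases i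
    · simp [vEx]
    · simp [vEx]; rw [k2] at k1; linarith
    · simp [vEx]; rw [k2]
  · intro h
    rw [SetLike.mem_coe, Submodule.mem_span_singleton] at h
    obtain ⟨c, rfl⟩ := h
    refine ⟨?_, ?_, ?_⟩
    · intro j hj
      rw [Hset_xt h0 h1] at hj
      rw [Set.mem_singleton_iff] at hj
      subst hj
      rw [gp1_xt]
      simp [vEx]
    · intro j hj
      rw [N1set_xt h0] at hj
      rw [Set.mem_singleton_iff] at hj
      subst hj
      rw [Dc12, pr_apply]
      simp [vEx]
    · intro j hj
      rw [N2set_xt h1] at hj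
      exact absurd hj (Set.notMem_empty j)

lemma cv_vals (c : ℝ) : (c • vEx) 0 = c ∧ (c • vEx) 1 = -c ∧ (c • vEx) 2 = 0 := by
  refine ⟨?_, ?_, ?_⟩ <;> simp [vEx]


lemma mpcclicq : MPCCLICQ F1Ex2 F2Ex2 xbarEx2 := by
  rw [MPCCLICQ, union1_xbar, union2_xbar]
  rw [Fintype.linearIndependent_iff]
  intro g hg
  rw [Fintype.sum_sum_type] at hg
  rw [Finset.sum_eq_zero (fun (b : ↥(∅ : Set (Fin 3))) _ => absurd b.2 (Set.notMem_empty b.1)), add_zero] at hg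
  have huniv : (∑ a : ↥(Set.univ : Set (Fin 3)),
        g (Sum.inl a) • Sum.elim (fun j : ↥(Set.univ : Set (Fin 3)) => Dc F1Ex2 j.1 xbarEx2)
          (fun j : ↥(∅ : Set (Fin 3)) => Dc F2Ex2 j.1 xbarEx2) (Sum.inl a))
      = ∑ i : Fin 3, g (Sum.inl ⟨i, trivial⟩) • Dc F1Ex2 i xbarEx2 :=
    (Fintype.sum_equiv (Equiv.Set.univ (Fin 3)).symm _ _ (fun i => rfl)).symm
  rw [huniv, Fin.sum_univ_three, Dc10, Dc11, Dc12] at hg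
  have e0 := DFunLike.congr_fun hg ![1,0,0]
  have e1 := DFunLike.congr_fun hg ![0,1,0]
  have e2 := DFunLike.congr_fun hg ![0,0,1]
  simp [pr] at e0 e1 e2
  rintro (⟨j, hj⟩ | ⟨j, hj⟩)
  · fin_cases j
    · show g (Sum.inl ⟨0, trivial⟩) = 0; linarith
    · show g (Sum.inl ⟨1, trivial⟩) = 0; linarith
    · show g (Sum.inl ⟨2, trivial⟩) = 0; linarith
  · exact absurd hj (Set.notMem_empty j)

lemma slicq {t : ℝ} (h0 : 0 < t) (h1 : t < 1) : SLICQ F1Ex2 F2Ex2 t (xtEx2 t) := by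
  rw [SLICQ, Hset_xt h0 h1, N1set_xt h0, N2set_xt h1]
  rw [Fintype.linearIndependent_iff]
  intro g hg
  rw [Fintype.sum_sum_type, Fintype.sum_sum_type] at hg
  rw [Finset.sum_eq_zero
    (fun (b : ↥(∅ : Set (Fin 3))) _ => absurd b.2 (Set.notMem_empty b.1)), add_zero] at hg
  rw [Fintype.sum_unique, Fintype.sum_unique] at hg
  simp only [Sum.elim_inl, Sum.elim_inr, Set.default_coe_singleton] at hg
  rw [Dc12] at hg
  have e0 := DFunLike.congr_fun hg ![1,0,0]
  have e2 := DFunLike.congr_fun hg ![0,0,1]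
  simp only [ContinuousLinearMap.add_apply, ContinuousLinearMap.smul_apply,
    smul_eq_mul, ContinuousLinearMap.zero_apply, gp1_xt, pr_apply] at e0 e2
  norm_num [Matrix.cons_val_two, Matrix.tail_cons, Matrix.head_cons] at e0 e2
  rw [e0] at e2
  norm_num at e2
  rintro (⟨j, hj⟩ | (⟨j, hj⟩ | ⟨j, hj⟩))
  · obtain rfl : j = 1 := hj
    exact e0
  · obtain rfl : j = 2 := hj
    exact e2
  · exact absurd hj (Set.notMem_empty j)


lemma stat_xbar : fderiv ℝ fEx2 xbarEx2 =
    ∑ j, (σ1Ex2 j • Dc F1Ex2 j xbarEx2 + (0 : Fin 3 → ℝ) j • Dc F2Ex2 j xbarEx2 +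
      (0 : Fin 3 → ℝ) j • Dc F1Ex2 j xbarEx2 + (0 : Fin 3 → ℝ) j • Dc F2Ex2 j xbarEx2) := by
  refine ContinuousLinearMap.ext fun ξ => ?_
  rw [fderiv_f, Fin.sum_univ_three, Dc10, Dc11, Dc12]
  simp [σ1Ex2, xbarEx2, pr]

lemma unique_mult (σ1 σ2 ϱ1 ϱ2 : Fin 3 → ℝ)
    (h : CStatWith fEx2 F1Ex2 F2Ex2 xbarEx2 σ1 σ2 ϱ1 ϱ2) :
    σ1 = σ1Ex2 ∧ σ2 = 0 ∧ ϱ1 = 0 ∧ ϱ2 = 0 := by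
  obtain ⟨w, -⟩ := h
  have hs2 : σ2 = 0 := funext fun j => w.supp_s2 j (by rw [a10_xbar]; exact Set.notMem_empty j)
  have hr1 : ϱ1 = 0 := funext fun j => w.supp_r1 j (by rw [a00_xbar]; exact Set.notMem_empty j)
  have hr2 : ϱ2 = 0 := funext fun j => w.supp_r2 j (by rw [a00_xbar]; exact Set.notMem_empty j)
  refine ⟨?_, hs2, hr1, hr2⟩
  have hst := w.stat
  rw [hs2, hr1, hr2, Fin.sum_univ_three, Dc10, Dc11, Dc12] at hst
  have e0 := DFunLike.congr_fun hst ![1,0,0]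
  have e1 := DFunLike.congr_fun hst ![0,1,0]
  have e2 := DFunLike.congr_fun hst ![0,0,1]
  rw [fderiv_f] at e0 e1 e2
  simp [pr, xbarEx2] at e0 e1 e2
  funext j
  fin_cases j <;> simp [σ1Ex2] <;> linarith

lemma xt0 (t : ℝ) : xtEx2 t 0 = t/2 := rfl
lemma xt1 (t : ℝ) : xtEx2 t 1 = t/2 := rfl
lemma xt2 (t : ℝ) : xtEx2 t 2 = 1 := rfl

lemma stat_xt (t : ℝ) : fderiv ℝ fEx2 (xtEx2 t) =
    ∑ j, (-(ηEx2 t j) • gradProd F1Ex2 F2Ex2 j (xtEx2 t) +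
      ν1Ex2 t j • Dc F1Ex2 j (xtEx2 t) + (0 : Fin 3 → ℝ) j • Dc F2Ex2 j (xtEx2 t)) := by
  refine ContinuousLinearMap.ext fun ξ => ?_
  rw [fderiv_f, Fin.sum_univ_three]
  simp only [gradProd, F1_xt, F2_xt, Dc10, Dc11, Dc12, Dc20, Dc21, Dc22, ηEx2, ν1Ex2,
    Matrix.cons_val_zero, Matrix.cons_val_one, Matrix.head_cons, Matrix.cons_val_two,
    Matrix.tail_cons, Pi.zero_apply, ContinuousLinearMap.add_apply,
    ContinuousLinearMap.smul_apply, ContinuousLinearMap.neg_apply,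
    ContinuousLinearMap.sub_apply, ContinuousLinearMap.zero_apply, zero_smul, smul_eq_mul,
    pr_apply, neg_smul, xt0, xt1, xt2]
  ring

/-- Example (necessity of NDC4), the limit point: `x̄ = (0,0,1)` is a
nondegenerate C-stationary point with the stated active sets and unique multipliers,
C-index `0`, violating NDC4, and is the limit of the nondegenerate KKT points
`x^t = (t/2, t/2, 1)` of `S(t)`, which have quadratic index `1`. -/
theorem example_ndc4_index_shift :
    NondegCStat fEx2 F1Ex2 F2Ex2 xbarEx2 σ1Ex2 0 0 0 ∧
    a01 F1Ex2 F2Ex2 xbarEx2 = Set.univ ∧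
    a10 F1Ex2 F2Ex2 xbarEx2 = ∅ ∧
    a00 F1Ex2 F2Ex2 xbarEx2 = ∅ ∧
    (∀ σ1 σ2 ϱ1 ϱ2 : Fin 3 → ℝ, CStatWith fEx2 F1Ex2 F2Ex2 xbarEx2 σ1 σ2 ϱ1 ϱ2 →
      σ1 = σ1Ex2 ∧ σ2 = 0 ∧ ϱ1 = 0 ∧ ϱ2 = 0) ∧
    HasCIndex fEx2 F1Ex2 F2Ex2 xbarEx2 σ1Ex2 0 0 0 0 ∧
    ¬ NDC4 F1Ex2 F2Ex2 xbarEx2 σ1Ex2 0 ∧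
    Tendsto xtEx2 (𝓝[>] (0:ℝ)) (𝓝 xbarEx2) ∧
    (∀ t ∈ Set.Ioo (0:ℝ) 1, ∃ η ν1 ν2 : Fin 3 → ℝ,
      NondegKKT fEx2 F1Ex2 F2Ex2 t (xtEx2 t) η ν1 ν2 ∧
      HasNegIndexOn (hQ (LagS fEx2 F1Ex2 F2Ex2 t η ν1 ν2) (xtEx2 t))
        (TspaceS F1Ex2 F2Ex2 t (xtEx2 t)) 1) := by
  constructor
  · -- NondegCStat
    refine ⟨⟨⟨?_, ?_, ?_, ?_, ?_, stat_xbar⟩, ?_⟩, mpcclicq, ?_, ?_⟩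
    · intro j; fin_cases j <;> norm_num [F1Ex2, F2Ex2, xbarEx2, Matrix.cons_val_two, Matrix.tail_cons, Matrix.head_cons]
    · intro j hj; exact absurd (a01_xbar ▸ Set.mem_univ j) hj
    · intro j _; rfl
    · intro j _; rfl
    · intro j _; rfl
    · intro j hj; rw [a00_xbar] at hj; exact absurd hj (Set.notMem_empty j)
    · intro j hj; rw [a00_xbar] at hj; exact absurd hj (Set.notMem_empty j)
    · intro ξ hξ _; rw [Tspace_xbar] at hξ; exact hξ
  refine ⟨a01_xbar, a10_xbar, a00_xbar, unique_mult, ?_, ?_, ?_, ?_⟩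
  · -- HasCIndex 0
    refine ⟨0, ⟨⟨⊥, ?_, ?_, ?_⟩, ?_⟩, ?_⟩
    · rw [Submodule.bot_coe, Tspace_xbar]
    · exact finrank_bot ℝ _
    · intro ξ hξ hne; exact absurd ((Submodule.mem_bot ℝ).mp hξ) hne
    · intro W hW _
      have hWb : W = ⊥ := (Submodule.eq_bot_iff W).mpr
        (fun x hx => by have := hW hx; rwa [Tspace_xbar, Set.mem_singleton_iff] at this)
      rw [hWb, finrank_bot]
    · have hset : {j | j ∈ a00 F1Ex2 F2Ex2 xbarEx2 ∧ (0:Fin 3 → ℝ) j < 0 ∧ (0:Fin 3 → ℝ) j < 0}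
          = (∅ : Set (Fin 3)) := by
        ext j; simp [a00_xbar]
      rw [BIndex, hset, Set.ncard_empty]
  · -- ¬ NDC4
    rintro ⟨h1, -⟩
    exact h1 0 (a01_xbar ▸ Set.mem_univ 0) (by norm_num [σ1Ex2])
  · -- Tendsto
    have hc : Continuous xtEx2 := by
      apply continuous_pi
      intro i
      fin_cases i
      · show Continuous fun a : ℝ => a/2
        fun_prop
      · show Continuous fun a : ℝ => a/2
        fun_prop
      · exact continuous_const
    have h0 : xtEx2 0 = xbarEx2 := by
      funext i; fin_cases i <;> norm_num [xtEx2, xbarEx2]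
    have := (hc.tendsto 0).mono_left (nhdsWithin_le_nhds (s := Set.Ioi (0:ℝ)))
    rwa [h0] at this
  · -- Scholtes part
    rintro t ⟨ht0, ht1⟩
    refine ⟨ηEx2 t, ν1Ex2 t, 0, ⟨⟨?_, ?_, ?_, ?_, ?_, ?_, ?_, stat_xt t⟩,
      slicq ht0 ht1, ?_, ?_, ?_, ?_⟩, ?_⟩
    · -- feasibility
      intro j
      rw [show F1Ex2 (xtEx2 t) j = ![t/2, t, 0] j from by rw [F1_xt],
        show F2Ex2 (xtEx2 t) j = ![1-t, 1, 1] j from by rw [F2_xt]]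
      fin_cases j <;> norm_num <;>
        first
          | (refine ⟨?_, ?_, ?_⟩ <;> nlinarith)
          | (refine ⟨?_, ?_⟩ <;> nlinarith)
          | nlinarith
          | linarith
    · intro j; fin_cases j <;> norm_num [ηEx2] <;> linarith
    · intro j; fin_cases j <;> norm_num [ν1Ex2] <;> nlinarith
    · intro j; norm_num
    · intro j
      rw [show F1Ex2 (xtEx2 t) j = ![t/2, t, 0] j from by rw [F1_xt],
        show F2Ex2 (xtEx2 t) j = ![1-t, 1, 1] j from by rw [F2_xt]]
      fin_cases j <;> simp [ηEx2] <;> ring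
    · intro j
      rw [show F1Ex2 (xtEx2 t) j = ![t/2, t, 0] j from by rw [F1_xt]]
      fin_cases j <;> simp [ν1Ex2]
    · intro j; norm_num
    · -- η positive on H
      intro j hj
      rw [Hset_xt ht0 ht1] at hj
      obtain rfl : j = 1 := hj
      simp [ηEx2]; linarith
    · -- ν1 positive on N1
      intro j hj
      rw [N1set_xt ht0] at hj
      obtain rfl : j = 2 := hj
      simp [ν1Ex2]; nlinarith
    · -- ν2 positive on N2
      intro j hj
      rw [N2set_xt ht1] at hj
      exact absurd hj (Set.notMem_empty j)
    · -- NondegOn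
      intro ξ hξ hall
      rw [TspaceS_xt ht0 ht1, SetLike.mem_coe, Submodule.mem_span_singleton] at hξ
      obtain ⟨c, rfl⟩ := hξ
      have hv : vEx ∈ TspaceS F1Ex2 F2Ex2 t (xtEx2 t) := by
        rw [TspaceS_xt ht0 ht1]
        exact Submodule.mem_span_singleton_self vEx
      have hz := hall vEx hv
      rw [LagS_eq_gS, hBil_gS, Hop_apply] at hz
      simp [vEx] at hz
      have hc : c = 0 := by linarith
      rw [hc, zero_smul]
    · -- HasNegIndexOn 1
      constructor
      · refine ⟨Submodule.span ℝ {vEx}, ?_, finrank_span_singleton vEx_ne, ?_⟩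
        · rw [TspaceS_xt ht0 ht1]
        · intro ξ hξ hne
          obtain ⟨c, rfl⟩ := Submodule.mem_span_singleton.mp hξ
          have hc : c ≠ 0 := by rintro rfl; simp at hne
          have hval : hQ (LagS fEx2 F1Ex2 F2Ex2 t (ηEx2 t) (ν1Ex2 t) 0) (xtEx2 t) (c • vEx)
              = Hop t (c • vEx) (c • vEx) := by
            rw [hQ, LagS_eq_gS, hBil_gS]
          rw [hval, Hop_apply]
          simp [vEx]
          nlinarith [mul_self_pos.mpr hc]
      · intro W hW _
        rw [TspaceS_xt ht0 ht1] at hW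
        have hle : W ≤ Submodule.span ℝ {vEx} := hW
        calc Module.finrank ℝ ↥W ≤ Module.finrank ℝ ↥(Submodule.span ℝ {vEx}) :=
              Submodule.finrank_mono hle
          _ = 1 := finrank_span_singleton vEx_ne


end MPCCPaper
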